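/- For r > s with s odd, there is no one-weight Z₂Z₂[u]-cyclic code in R_{r,s} generated by (l(x), g(x) + u·a(x)) with g(x) ≢ 0 (mod u). -/

import Mathlib

open TrivSqZeroExt Polynomial

/-- The four element ring `R = ℤ₂ + u ℤ₂` with `u ^ 2 = 0`, realized as the
dual numbers over `ZMod 2`; the element `u` is `DualNumber.eps`. -/
abbrev Ru : Type := DualNumber (ZMod 2)

instance : Fintype Ru := inferInstanceAs (Fintype (ZMod 2 × ZMod 2))
instance : DecidableEq Ru := inferInstanceAs (DecidableEq (ZMod 2 × ZMod 2))

/-- The ring homomorphism `η : R → ℤ₂`, `η (p + u q) = p`. -/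
noncomputable def eta : Ru →+* ZMod 2 :=
  (TrivSqZeroExt.fstHom (ZMod 2) (ZMod 2) (ZMod 2)).toRingHom

/-- The `R`-module structure on `ℤ₂ʳ × Rˢ`:
`d • (a, b) = (η d * a, d * b)` componentwise. -/
noncomputable instance modM (r s : ℕ) :
    Module Ru ((Fin r → ZMod 2) × (Fin s → Ru)) :=
  letI m1 : Module Ru (ZMod 2) := Module.compHom (ZMod 2) eta
  letI m2 : Module Ru (Fin r → ZMod 2) :=
    @Pi.module (Fin r) (fun _ => ZMod 2) Ru _ _ (fun _ => m1)
  letI m3 : Module Ru (Fin s → Ru) :=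
    @Pi.module (Fin s) (fun _ => Ru) Ru _ _ (fun _ => Semiring.toModule)
  @Prod.instModule _ _ _ _ _ _ m2 m3

/-- Lee weight on `R`: `wt_L 0 = 0`, `wt_L 1 = 1`, `wt_L u = 2`, `wt_L (1+u) = 1`. -/
def leeWt (x : Ru) : ℕ :=
  if TrivSqZeroExt.fst x ≠ 0 then 1 else if TrivSqZeroExt.snd x ≠ 0 then 2 else 0

/-- The weight: Hamming weight on the `ℤ₂`-part plus Lee weight on the `R`-part. -/
def wt {r s : ℕ} (v : (Fin r → ZMod 2) × (Fin s → Ru)) : ℕ :=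
  hammingNorm v.1 + ∑ j, leeWt (v.2 j)

/-- The Gray map `Φ(x, p + u q) = (x, q, p + q)` (componentwise). -/
def gray {r s : ℕ} (v : (Fin r → ZMod 2) × (Fin s → Ru)) :
    Fin (r + 2*s) → ZMod 2 :=
  fun i =>
    Fin.append (Fin.append v.1 (fun j => TrivSqZeroExt.snd (v.2 j)))
      (fun j => TrivSqZeroExt.fst (v.2 j) + TrivSqZeroExt.snd (v.2 j))
      (Fin.cast (by omega) i)

/-- The inner product `⟨v, w⟩ = u·Σ aᵢdᵢ + Σ bⱼeⱼ ∈ R`. -/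
noncomputable def innerP {r s : ℕ} (v w : (Fin r → ZMod 2) × (Fin s → Ru)) : Ru :=
  DualNumber.eps * TrivSqZeroExt.inl (∑ i, v.1 i * w.1 i) + ∑ j, v.2 j * w.2 j

/-- The simultaneous cyclic shift of both blocks. -/
def shiftT {r s : ℕ} (v : (Fin r → ZMod 2) × (Fin s → Ru)) :
    (Fin r → ZMod 2) × (Fin s → Ru) :=
  (fun i => v.1 ⟨(i.val + (r - 1)) % r, Nat.mod_lt _ i.pos⟩,
   fun j => v.2 ⟨(j.val + (s - 1)) % s, Nat.mod_lt _ j.pos⟩)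

/-- The codeword of `ℤ₂ʳ × Rˢ` corresponding to `(l(x), g(x) + u·a(x))`. -/
noncomputable def genword (r s : ℕ) (l g a : Polynomial (ZMod 2)) :
    (Fin r → ZMod 2) × (Fin s → Ru) :=
  (fun i => l.coeff i,
   fun j => TrivSqZeroExt.inl (g.coeff j) + DualNumber.eps * TrivSqZeroExt.inl (a.coeff j))

/-- The cyclic code generated by `(l(x), g(x) + u·a(x))`: the `R`-span of all
simultaneous cyclic shifts of the corresponding codeword. -/
noncomputable def cycCode (r s : ℕ) (l g a : Polynomial (ZMod 2)) :
    Submodule Ru ((Fin r → ZMod 2) × (Fin s → Ru)) :=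
  Submodule.span Ru {v | ∃ k : ℕ, v = shiftT^[k] (genword r s l g a)}

/-- The `γ`-fold replication map `(v_r, v_s) ↦ (v_r, …, v_r, v_s, …, v_s)`. -/
def repMap (γ : ℕ) {r s : ℕ} (v : (Fin r → ZMod 2) × (Fin s → Ru)) :
    (Fin (γ * r) → ZMod 2) × (Fin (γ * s) → Ru) :=
  (fun i => v.1 ⟨i.val % r, Nat.mod_lt _ (by
      rcases Nat.eq_zero_or_pos r with h | h
      · exact absurd i.isLt (by simp [h])
      · exact h)⟩,
   fun j => v.2 ⟨j.val % s, Nat.mod_lt _ (by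
      rcases Nat.eq_zero_or_pos s with h | h
      · exact absurd j.isLt (by simp [h])
      · exact h)⟩)

/- ======================  auxiliary lemmas for the proof  ====================== -/

section Helpers

open Finset

private lemma zmod2_ind : ∀ x : ZMod 2, (if x ≠ 0 then (1 : ZMod 2) else 0) = x := by decide

private lemma zmod2_one_of_ne : ∀ x : ZMod 2, x ≠ 0 → x = 1 := by decide

private lemma zmod2_two : ∀ x : ZMod 2, x + x = 0 := by decide

private def finZMod (n : ℕ) [NeZero n] : Fin n ≃ ZMod n where
  toFun i := (i.val : ZMod n)
  invFun z := ⟨z.val, z.val_lt⟩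
  left_inv i := Fin.ext (ZMod.val_cast_of_lt i.isLt)
  right_inv z := ZMod.natCast_rightInverse z

private lemma shiftT_iter_fst {r s : ℕ} (v : (Fin r → ZMod 2) × (Fin s → Ru)) (k : ℕ)
    (i : Fin r) :
    (shiftT^[k] v).1 i = v.1 ⟨(i.val + k * (r - 1)) % r, Nat.mod_lt _ i.pos⟩ := by
  induction k generalizing v with
  | zero =>
      simp only [Function.iterate_zero_apply]
      exact congrArg v.1 (Fin.ext (by simp [Nat.mod_eq_of_lt i.isLt]))
  | succ n ih =>
      rw [Function.iterate_succ_apply, ih (shiftT v)]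
      show v.1 ⟨((i.val + n * (r-1)) % r + (r-1)) % r, _⟩ = _
      have hidx : ((i.val + n * (r-1)) % r + (r-1)) % r = (i.val + (n+1) * (r-1)) % r := by
        rw [Nat.mod_add_mod]; congr 1; ring
      exact congrArg v.1 (Fin.ext hidx)

private lemma shiftT_iter_snd {r s : ℕ} (v : (Fin r → ZMod 2) × (Fin s → Ru)) (k : ℕ)
    (j : Fin s) :
    (shiftT^[k] v).2 j = v.2 ⟨(j.val + k * (s - 1)) % s, Nat.mod_lt _ j.pos⟩ := by
  induction k generalizing v with
  | zero =>
      simp only [Function.iterate_zero_apply]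
      exact congrArg v.2 (Fin.ext (by simp [Nat.mod_eq_of_lt j.isLt]))
  | succ n ih =>
      rw [Function.iterate_succ_apply, ih (shiftT v)]
      show v.2 ⟨((j.val + n * (s-1)) % s + (s-1)) % s, _⟩ = _
      have hidx : ((j.val + n * (s-1)) % s + (s-1)) % s = (j.val + (n+1) * (s-1)) % s := by
        rw [Nat.mod_add_mod]; congr 1; ring
      exact congrArg v.2 (Fin.ext hidx)

private lemma key_mod {n : ℕ} [NeZero n] (k : ℕ) (i : Fin n) :
    ((i.val + k * (n - 1)) % n : ℕ) = ((i.val : ZMod n) - (k : ZMod n)).val := by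
  have hn : 0 < n := Nat.pos_of_ne_zero (NeZero.ne n)
  have h1 : (((i.val + k * (n - 1)) % n : ℕ) : ZMod n) = (i.val : ZMod n) - k := by
    rw [ZMod.natCast_mod]
    push_cast [Nat.cast_sub (by omega : 1 ≤ n)]
    rw [ZMod.natCast_self]
    ring
  rw [← h1, ZMod.val_cast_of_lt (Nat.mod_lt _ hn)]

private lemma ne_zero_of_snd {r s : ℕ} (v : (Fin r → ZMod 2) × (Fin s → Ru)) (j : Fin s)
    (h : TrivSqZeroExt.snd (v.2 j) ≠ 0) : v ≠ 0 := by
  intro hv; rw [hv] at h; simp at h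

private lemma ne_zero_of_fst {r s : ℕ} (v : (Fin r → ZMod 2) × (Fin s → Ru)) (j : Fin s)
    (h : TrivSqZeroExt.fst (v.2 j) ≠ 0) : v ≠ 0 := by
  intro hv; rw [hv] at h; simp at h

private lemma ne_zero_of_one {r s : ℕ} (v : (Fin r → ZMod 2) × (Fin s → Ru)) (i : Fin r)
    (h : v.1 i ≠ 0) : v ≠ 0 := by
  intro hv; rw [hv] at h; simp at h

private lemma wt_eq_of {r s : ℕ} [NeZero r] [NeZero s]
    (v : (Fin r → ZMod 2) × (Fin s → Ru)) (F : ZMod r → ZMod 2) (P Q : ZMod s → ZMod 2)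
    (h1 : ∀ i : Fin r, v.1 i = F (i.val : ZMod r))
    (h2 : ∀ j : Fin s, TrivSqZeroExt.fst (v.2 j) = P (j.val : ZMod s))
    (h3 : ∀ j : Fin s, TrivSqZeroExt.snd (v.2 j) = Q (j.val : ZMod s)) :
    wt v = (univ.filter fun z : ZMod r => F z ≠ 0).card +
      ((univ.filter fun z : ZMod s => P z ≠ 0).card +
        2 * (univ.filter fun z : ZMod s => P z = 0 ∧ Q z ≠ 0).card) := by
  unfold wt
  congr 1
  · unfold hammingNorm
    apply Finset.card_bij' (fun i _ => ((i.val : ZMod r)))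
      (fun z _ => (⟨z.val, z.val_lt⟩ : Fin r))
    · intro i hi
      simp only [Finset.mem_filter, Finset.mem_univ, true_and] at hi ⊢
      rwa [h1] at hi
    · intro z hz
      simp only [Finset.mem_filter, Finset.mem_univ, true_and] at hz ⊢
      rw [h1]
      simpa [ZMod.natCast_rightInverse z] using hz
    · intro i _; apply Fin.ext; simp [ZMod.val_cast_of_lt i.isLt]
    · intro z _; exact ZMod.natCast_rightInverse z
  · have step1 : ∀ j : Fin s, leeWt (v.2 j) =
        (if P (j.val : ZMod s) ≠ 0 then 1 else 0) +
          2 * (if P (j.val : ZMod s) = 0 ∧ Q (j.val : ZMod s) ≠ 0 then 1 else 0) := by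
      intro j
      unfold leeWt
      rw [h2, h3]
      by_cases hp : P (j.val : ZMod s) = 0 <;> by_cases hq : Q (j.val : ZMod s) = 0 <;>
        simp [hp, hq]
    calc ∑ j : Fin s, leeWt (v.2 j)
        = ∑ z : ZMod s, ((if P z ≠ 0 then 1 else 0) +
            2 * (if P z = 0 ∧ Q z ≠ 0 then 1 else 0)) := by
          rw [Fintype.sum_equiv (finZMod s) _
            (fun z => (if P z ≠ 0 then 1 else 0) + 2 * (if P z = 0 ∧ Q z ≠ 0 then 1 else 0))
            (fun i => step1 i)]
      _ = _ := by
          rw [Finset.sum_add_distrib, ← Finset.mul_sum, ← Finset.card_filter, ← Finset.card_filter]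

end Helpers
section Parity

open Finset

private lemma zmod2_eq_of_add : ∀ a b : ZMod 2, a + b = 0 → a = b := by decide
private lemma zmod2_ne_add : ∀ a b : ZMod 2, a ≠ b → b + a ≠ 0 := by decide
private lemma zmod2_addone : ∀ a : ZMod 2, (a + 1 ≠ 0) ↔ a = 0 := by decide
private lemma zmod2_oneadd : ∀ a : ZMod 2, (1 + a ≠ 0) ↔ a = 0 := by decide

private lemma card_filter_parity {n : ℕ} [NeZero n] (P : ZMod n → ZMod 2) :
    (((Finset.univ.filter fun z : ZMod n => P z ≠ 0).card : ℕ) : ZMod 2) =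
      ∑ z : ZMod n, P z := by
  rw [Finset.card_filter, Nat.cast_sum]
  refine Finset.sum_congr rfl fun z _ => ?_
  by_cases h : P z = 0
  · simp [h]
  · simp [h, (zmod2_one_of_ne _ h)]

private lemma odd_cast_one {n : ℕ} (hn : Odd n) : ((n : ℕ) : ZMod 2) = 1 := by
  obtain ⟨p, hp⟩ := hn
  subst hp
  push_cast
  rw [show (2 : ZMod 2) = 0 by decide]
  ring

private lemma even_cast_zero {n : ℕ} (hn : Even n) : ((n : ℕ) : ZMod 2) = 0 := by
  obtain ⟨p, hp⟩ := hn
  subst hp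
  push_cast
  exact zmod2_two _

end Parity
set_option maxHeartbeats 1000000 in
set_option synthInstance.maxHeartbeats 1000000 in
open Finset in
/-- for `r > s` with `s` odd, there is no one-weight
`ℤ₂ℤ₂[u]`-cyclic code generated by `(l(x), g(x) + u·a(x))` with `g ≢ 0 (mod u)`. -/
theorem no_one_weight_cyclic_r_gt_s (r s : ℕ) (hs : Odd s) (hrs : s < r)
    (l g a : Polynomial (ZMod 2))
    (hl : l.natDegree < r) (hgd : g.natDegree < s) (had : a.natDegree < s)
    (hg0 : g ≠ 0) (hag : a ∣ g) (hgs : g ∣ (X ^ s - 1)) :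
    ¬ ∃ m, ∀ c ∈ cycCode r s l g a, c ≠ 0 → wt c = m := by
  rintro ⟨m, hm⟩
  have hs0 : 0 < s := hs.pos
  have hr0 : 0 < r := hs0.trans hrs
  haveI : NeZero s := ⟨hs0.ne'⟩
  haveI : NeZero r := ⟨hr0.ne'⟩
  classical
  set L : ZMod r → ZMod 2 := fun z => l.coeff z.val with hLdef
  set G : ZMod s → ZMod 2 := fun z => g.coeff z.val with hGdef
  set A : ZMod s → ZMod 2 := fun z => a.coeff z.val with hAdef
  set Xw : ℕ → (Fin r → ZMod 2) × (Fin s → Ru) :=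
    fun k => shiftT^[k] (genword r s l g a) with hXdef
  have hXmem : ∀ k, Xw k ∈ cycCode r s l g a := fun k => Submodule.subset_span ⟨k, rfl⟩
  -- component formulas for shifted generators
  have hX1 : ∀ (k : ℕ) (i : Fin r), (Xw k).1 i = L ((i.val : ZMod r) - (k : ZMod r)) := by
    intro k i
    show (shiftT^[k] (genword r s l g a)).1 i = _
    rw [shiftT_iter_fst]
    show l.coeff ((i.val + k * (r - 1)) % r) = _
    rw [key_mod k i]
  have hX2f : ∀ (k : ℕ) (j : Fin s),
      TrivSqZeroExt.fst ((Xw k).2 j) = G ((j.val : ZMod s) - (k : ZMod s)) := by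
    intro k j
    show TrivSqZeroExt.fst ((shiftT^[k] (genword r s l g a)).2 j) = _
    rw [shiftT_iter_snd]
    show TrivSqZeroExt.fst (TrivSqZeroExt.inl (g.coeff ((j.val + k * (s - 1)) % s))
      + DualNumber.eps * TrivSqZeroExt.inl (a.coeff ((j.val + k * (s - 1)) % s))) = _
    rw [key_mod k j]
    simp
    rfl
  have hX2s : ∀ (k : ℕ) (j : Fin s),
      TrivSqZeroExt.snd ((Xw k).2 j) = A ((j.val : ZMod s) - (k : ZMod s)) := by
    intro k j
    show TrivSqZeroExt.snd ((shiftT^[k] (genword r s l g a)).2 j) = _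
    rw [shiftT_iter_snd]
    show TrivSqZeroExt.snd (TrivSqZeroExt.inl (g.coeff ((j.val + k * (s - 1)) % s))
      + DualNumber.eps * TrivSqZeroExt.inl (a.coeff ((j.val + k * (s - 1)) % s))) = _
    rw [key_mod k j]
    simp
    rfl
  -- scalar multiplication by eps
  have hsm1 : ∀ (y : (Fin r → ZMod 2) × (Fin s → Ru)) (i : Fin r),
      ((DualNumber.eps : Ru) • y).1 i = 0 := by
    intro y i
    show eta DualNumber.eps * y.1 i = 0
    rw [show eta DualNumber.eps = 0 from rfl, zero_mul]
  have hsm2f : ∀ (y : (Fin r → ZMod 2) × (Fin s → Ru)) (j : Fin s),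
      TrivSqZeroExt.fst (((DualNumber.eps : Ru) • y).2 j) = 0 := by
    intro y j
    show TrivSqZeroExt.fst ((DualNumber.eps : Ru) * y.2 j) = 0
    simp
  have hsm2s : ∀ (y : (Fin r → ZMod 2) × (Fin s → Ru)) (j : Fin s),
      TrivSqZeroExt.snd (((DualNumber.eps : Ru) • y).2 j) = TrivSqZeroExt.fst (y.2 j) := by
    intro y j
    show TrivSqZeroExt.snd ((DualNumber.eps : Ru) * y.2 j) = _
    simp
  -- cardinalities
  set w : ℕ := (Finset.univ.filter fun z : ZMod s => G z ≠ 0).card with hwdef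
  set wl : ℕ := (Finset.univ.filter fun z : ZMod r => L z ≠ 0).card with hwldef
  set t : ℕ := (Finset.univ.filter fun z : ZMod s => G z = 0 ∧ A z ≠ 0).card with htdef
  -- witness for g ≠ 0
  set z0 : ZMod s := ((g.natDegree : ℕ) : ZMod s) with hz0def
  have hz0 : G z0 ≠ 0 := by
    rw [hGdef]
    show g.coeff z0.val ≠ 0
    rw [hz0def, ZMod.val_cast_of_lt hgd]
    exact Polynomial.leadingCoeff_ne_zero.mpr hg0
  set j0 : Fin s := ⟨z0.val, z0.val_lt⟩ with hj0def
  have hj0 : ((j0.val : ℕ) : ZMod s) = z0 := ZMod.natCast_rightInverse z0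
  set i0 : Fin r := ⟨0, hr0⟩ with hi0def
  have hwpos : 0 < w := Finset.card_pos.mpr ⟨z0, Finset.mem_filter.mpr ⟨Finset.mem_univ _, hz0⟩⟩
  -- weight of u • X 0  :  m = 2 w
  have hE0 : m = 2 * w := by
    have hne : ((DualNumber.eps : Ru) • Xw 0) ≠ 0 := by
      refine ne_zero_of_snd _ j0 ?_
      rw [hsm2s, hX2f]
      simpa [hj0] using hz0
    have hwt := hm _ (Submodule.smul_mem _ (DualNumber.eps : Ru) (hXmem 0)) hne
    rw [wt_eq_of ((DualNumber.eps : Ru) • Xw 0) (fun _ => 0) (fun _ => 0) G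
      (fun i => hsm1 _ i) (fun j => hsm2f _ j)
      (fun j => by rw [hsm2s, hX2f]; simp)] at hwt
    have e1 : (Finset.univ.filter fun z : ZMod r => (0 : ZMod 2) ≠ 0).card = 0 := by simp
    have e2 : (Finset.univ.filter fun z : ZMod s => (0 : ZMod 2) ≠ 0).card = 0 := by simp
    have e3 : (Finset.univ.filter fun z : ZMod s => (0 : ZMod 2) = 0 ∧ G z ≠ 0).card = w := by
      rw [hwdef]; congr 1; ext z; simp
    rw [e1, e2, e3] at hwt
    omega
  -- weight of X 0  :  wl + (w + 2 t) = m
  have hW1 : wl + (w + 2 * t) = m := by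
    have hne : Xw 0 ≠ 0 := by
      refine ne_zero_of_fst _ j0 ?_
      rw [hX2f]
      simpa [hj0] using hz0
    have hwt := hm _ (hXmem 0) hne
    rw [wt_eq_of (Xw 0) L G A
      (fun i => by rw [hX1]; simp) (fun j => by rw [hX2f]; simp)
      (fun j => by rw [hX2s]; simp)] at hwt
    omega
  -- sum-of-components helpers
  have hPsum1 : ∀ (f : ℕ → (Fin r → ZMod 2) × (Fin s → Ru)) (K : Finset ℕ) (i : Fin r),
      (∑ k ∈ K, f k).1 i = ∑ k ∈ K, (f k).1 i := by
    intro f K i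
    exact map_sum ((Pi.evalAddMonoidHom (fun _ : Fin r => ZMod 2) i).comp
      (AddMonoidHom.fst (Fin r → ZMod 2) (Fin s → Ru))) f K
  have hPsum2 : ∀ (f : ℕ → (Fin r → ZMod 2) × (Fin s → Ru)) (K : Finset ℕ) (j : Fin s),
      (∑ k ∈ K, f k).2 j = ∑ k ∈ K, (f k).2 j := by
    intro f K j
    exact map_sum ((Pi.evalAddMonoidHom (fun _ : Fin s => Ru) j).comp
      (AddMonoidHom.snd (Fin r → ZMod 2) (Fin s → Ru))) f K
  by_cases hB : ∀ z : ZMod s, G (z - 1) = G z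
  · -- CASE B : g is shift-invariant, i.e. the all-ones vector
    have hper : ∀ (k : ℕ) (z : ZMod s), G (z - (k : ZMod s)) = G z := by
      intro k
      induction k with
      | zero => intro z; simp
      | succ n ih =>
          intro z
          have h1 : z - ((n + 1 : ℕ) : ZMod s) = (z - 1) - (n : ZMod s) := by
            push_cast; ring
          rw [h1, ih (z - 1), hB z]
    have hGconst : ∀ z : ZMod s, G z = 1 := by
      intro z
      have h1 : z0 - (((z0 - z).val : ℕ) : ZMod s) = z := by
        rw [ZMod.natCast_rightInverse (z0 - z)]; ring
      have h2 := hper (z0 - z).val z0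
      rw [h1] at h2
      exact zmod2_one_of_ne _ (by rw [h2]; exact hz0)
    have hwS : w = s := by
      rw [hwdef]
      rw [Finset.filter_true_of_mem (fun z _ => by rw [hGconst z]; exact one_ne_zero)]
      rw [Finset.card_univ, ZMod.card]
    have htz : t = 0 := by
      rw [htdef, Finset.card_eq_zero]
      refine Finset.filter_false_of_mem fun z _ => ?_
      rw [hGconst z]
      simp
    have hwlS : wl = s := by omega
    -- the codeword X0 + Xs + u·X0 forces L to be s-periodic
    have hLper : ∀ z : ZMod r, L (z - ((s : ℕ) : ZMod r)) = L z := by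
      have hv2mem : Xw 0 + Xw s + (DualNumber.eps : Ru) • Xw 0 ∈ cycCode r s l g a :=
        Submodule.add_mem _ (Submodule.add_mem _ (hXmem 0) (hXmem s))
          (Submodule.smul_mem _ _ (hXmem 0))
      have hc1 : ∀ i : Fin r, (Xw 0 + Xw s + (DualNumber.eps : Ru) • Xw 0).1 i
          = (fun z => L z + L (z - ((s : ℕ) : ZMod r))) ((i.val : ℕ) : ZMod r) := by
        intro i
        show (Xw 0).1 i + (Xw s).1 i + ((DualNumber.eps : Ru) • Xw 0).1 i = _
        rw [hX1, hX1, hsm1]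
        simp
      have hc2 : ∀ j : Fin s,
          TrivSqZeroExt.fst ((Xw 0 + Xw s + (DualNumber.eps : Ru) • Xw 0).2 j)
          = (fun _ : ZMod s => (0 : ZMod 2)) ((j.val : ℕ) : ZMod s) := by
        intro j
        show TrivSqZeroExt.fst ((Xw 0).2 j + (Xw s).2 j + ((DualNumber.eps : Ru) • Xw 0).2 j) = _
        rw [TrivSqZeroExt.fst_add, TrivSqZeroExt.fst_add, hX2f, hX2f, hsm2f]
        simp [ZMod.natCast_self, zmod2_two]
      have hc3 : ∀ j : Fin s,
          TrivSqZeroExt.snd ((Xw 0 + Xw s + (DualNumber.eps : Ru) • Xw 0).2 j)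
          = (fun _ : ZMod s => (1 : ZMod 2)) ((j.val : ℕ) : ZMod s) := by
        intro j
        show TrivSqZeroExt.snd ((Xw 0).2 j + (Xw s).2 j + ((DualNumber.eps : Ru) • Xw 0).2 j) = _
        rw [TrivSqZeroExt.snd_add, TrivSqZeroExt.snd_add, hX2s, hX2s, hsm2s, hX2f]
        simp [ZMod.natCast_self, zmod2_two, hGconst]
      have hne : Xw 0 + Xw s + (DualNumber.eps : Ru) • Xw 0 ≠ 0 :=
        ne_zero_of_snd _ j0 (by rw [hc3 j0]; exact one_ne_zero)
      have hwt := hm _ hv2mem hne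
      rw [wt_eq_of _ (fun z => L z + L (z - ((s : ℕ) : ZMod r))) (fun _ => (0 : ZMod 2))
        (fun _ => (1 : ZMod 2)) hc1 hc2 hc3] at hwt
      have e2 : (Finset.univ.filter fun z : ZMod s => (0 : ZMod 2) ≠ 0).card = 0 := by simp
      have e3 : (Finset.univ.filter
          fun z : ZMod s => (0 : ZMod 2) = 0 ∧ (1 : ZMod 2) ≠ 0).card = s := by
        rw [Finset.filter_true_of_mem (by simp), Finset.card_univ, ZMod.card]
      rw [e2, e3] at hwt
      have hcard0 : (Finset.univ.filter
          fun z : ZMod r => L z + L (z - ((s : ℕ) : ZMod r)) ≠ 0).card = 0 := by omega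
      intro z
      rw [Finset.card_eq_zero] at hcard0
      have hz : z ∉ Finset.univ.filter
          fun z : ZMod r => L z + L (z - ((s : ℕ) : ZMod r)) ≠ 0 := by
        rw [hcard0]; exact Finset.notMem_empty z
      simp only [Finset.mem_filter, Finset.mem_univ, true_and, not_not] at hz
      exact (zmod2_eq_of_add _ _ hz).symm
    -- the full sum of all r shifts
    have hYmem : (∑ k ∈ Finset.range r, Xw k) ∈ cycCode r s l g a :=
      Submodule.sum_mem _ fun k _ => hXmem k
    have hY1 : ∀ i : Fin r, (∑ k ∈ Finset.range r, Xw k).1 i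
        = (fun _ : ZMod r => (1 : ZMod 2)) ((i.val : ℕ) : ZMod r) := by
      intro i
      rw [hPsum1]
      rw [Finset.sum_congr rfl (fun k _ => hX1 k i)]
      have h3 : ∑ k ∈ Finset.range r, L (((i.val : ℕ) : ZMod r) - (k : ZMod r))
          = ∑ z : ZMod r, L z := by
        refine Finset.sum_nbij' (fun k => ((i.val : ℕ) : ZMod r) - (k : ZMod r))
          (fun z => (((i.val : ℕ) : ZMod r) - z).val) ?_ ?_ ?_ ?_ ?_
        · intro k _; exact Finset.mem_univ _
        · intro z _; exact Finset.mem_range.mpr (ZMod.val_lt _)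
        · intro k hk
          show ((((i.val : ℕ) : ZMod r) - ((((i.val : ℕ) : ZMod r)) - (k : ZMod r))).val) = k
          rw [sub_sub_cancel, ZMod.val_cast_of_lt (Finset.mem_range.mp hk)]
        · intro z _
          show ((i.val : ℕ) : ZMod r) - (((((i.val : ℕ) : ZMod r) - z).val : ℕ) : ZMod r) = z
          rw [ZMod.natCast_rightInverse, sub_sub_cancel]
        · intro k _; rfl
      rw [h3]
      have hpar := card_filter_parity L
      rw [← hwldef] at hpar
      rw [← hpar, hwlS, odd_cast_one hs]
    have hY2f : ∀ j : Fin s, TrivSqZeroExt.fst ((∑ k ∈ Finset.range r, Xw k).2 j)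
        = ((r : ℕ) : ZMod 2) := by
      intro j
      rw [hPsum2, TrivSqZeroExt.fst_sum]
      rw [Finset.sum_congr rfl (fun k _ => hX2f k j)]
      rw [Finset.sum_congr rfl (fun k _ => hGconst _)]
      rw [Finset.sum_const, Finset.card_range, nsmul_eq_mul, mul_one]
    have hY2s : ∀ j : Fin s, TrivSqZeroExt.snd ((∑ k ∈ Finset.range r, Xw k).2 j)
        = (fun z : ZMod s => ∑ k ∈ Finset.range r, A (z - (k : ZMod s))) ((j.val : ℕ) : ZMod s) := by
      intro j
      rw [hPsum2, TrivSqZeroExt.snd_sum]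
      exact Finset.sum_congr rfl (fun k _ => hX2s k j)
    have e2' : (Finset.univ.filter fun z : ZMod s => (1 : ZMod 2) ≠ 0).card = s := by
      rw [Finset.filter_true_of_mem (by simp), Finset.card_univ, ZMod.card]
    rcases Nat.even_or_odd r with hre | hro
    · -- r even : X0 + Σ shifts
      have hmemY' : Xw 0 + (∑ k ∈ Finset.range r, Xw k) ∈ cycCode r s l g a :=
        Submodule.add_mem _ (hXmem 0) hYmem
      have hc1 : ∀ i : Fin r, (Xw 0 + ∑ k ∈ Finset.range r, Xw k).1 i
          = (fun z => L z + 1) ((i.val : ℕ) : ZMod r) := by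
        intro i
        show (Xw 0).1 i + (∑ k ∈ Finset.range r, Xw k).1 i = _
        rw [hX1, hY1 i]
        simp
      have hc2 : ∀ j : Fin s,
          TrivSqZeroExt.fst ((Xw 0 + ∑ k ∈ Finset.range r, Xw k).2 j)
          = (fun _ : ZMod s => (1 : ZMod 2)) ((j.val : ℕ) : ZMod s) := by
        intro j
        show TrivSqZeroExt.fst ((Xw 0).2 j + (∑ k ∈ Finset.range r, Xw k).2 j) = _
        rw [TrivSqZeroExt.fst_add, hX2f, hY2f j, even_cast_zero hre]
        simp [hGconst]
      have hc3 : ∀ j : Fin s,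
          TrivSqZeroExt.snd ((Xw 0 + ∑ k ∈ Finset.range r, Xw k).2 j)
          = (fun z : ZMod s => A z + ∑ k ∈ Finset.range r, A (z - (k : ZMod s)))
              ((j.val : ℕ) : ZMod s) := by
        intro j
        show TrivSqZeroExt.snd ((Xw 0).2 j + (∑ k ∈ Finset.range r, Xw k).2 j) = _
        rw [TrivSqZeroExt.snd_add, hX2s, hY2s j]
        simp
      have hne : Xw 0 + (∑ k ∈ Finset.range r, Xw k) ≠ 0 :=
        ne_zero_of_fst _ j0 (by rw [hc2 j0]; exact one_ne_zero)
      have hwt := hm _ hmemY' hne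
      rw [wt_eq_of _ (fun z => L z + 1) (fun _ => (1 : ZMod 2))
        (fun z : ZMod s => A z + ∑ k ∈ Finset.range r, A (z - (k : ZMod s))) hc1 hc2 hc3] at hwt
      have e3' : (Finset.univ.filter fun z : ZMod s => (1 : ZMod 2) = 0 ∧
          (A z + ∑ k ∈ Finset.range r, A (z - (k : ZMod s))) ≠ 0).card = 0 := by
        rw [Finset.card_eq_zero]
        exact Finset.filter_false_of_mem fun z _ => by simp
      rw [e2', e3'] at hwt
      have e4 : (Finset.univ.filter fun z : ZMod r => L z + 1 ≠ 0)
          = (Finset.univ.filter fun z : ZMod r => L z = 0) := by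
        ext z; simp [zmod2_addone]
      rw [e4] at hwt
      have e5 := Finset.card_filter_add_card_filter_not
        (s := (Finset.univ : Finset (ZMod r))) (p := fun z => L z = 0)
      have e6 : (Finset.univ.filter fun z : ZMod r => ¬ L z = 0)
          = (Finset.univ.filter fun z : ZMod r => L z ≠ 0) := by
        ext z; simp
      rw [e6, ← hwldef, Finset.card_univ, ZMod.card] at e5
      -- hwt : #(L=0) + (s + 2*0) = m,  e5 : #(L=0) + wl = r
      have hr2s : r = 2 * s := by omega
      have hcast : ((s : ℕ) : ZMod r) + ((s : ℕ) : ZMod r) = 0 := by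
        rw [← Nat.cast_add, show s + s = r by omega, ZMod.natCast_self]
      have hLadd : ∀ z : ZMod r, L (z + ((s : ℕ) : ZMod r)) = L z := by
        intro z
        have h1 := hLper (z + ((s : ℕ) : ZMod r))
        rw [add_sub_cancel_right] at h1
        exact h1.symm
      have hsne : ((s : ℕ) : ZMod r) ≠ 0 := by
        intro hcontr
        have h1 := congrArg ZMod.val hcontr
        rw [ZMod.val_cast_of_lt hrs, ZMod.val_zero] at h1
        omega
      have hsum0 : ∑ z : ZMod r, L z = 0 := by
        apply Finset.sum_ninvolution (g := fun z => z + ((s : ℕ) : ZMod r))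
        · intro z; rw [hLadd]; exact zmod2_two _
        · intro z _ heq
          exact hsne (by simpa using heq)
        · intro z; exact Finset.mem_univ _
        · intro z; rw [add_assoc, hcast, add_zero]
      have hpar := card_filter_parity L
      rw [← hwldef, hwlS, hsum0, odd_cast_one hs] at hpar
      exact one_ne_zero hpar
    · -- r odd : the sum of all shifts has weight r + s
      have hne : (∑ k ∈ Finset.range r, Xw k) ≠ 0 :=
        ne_zero_of_one _ i0 (by rw [hY1 i0]; exact one_ne_zero)
      have hwt := hm _ hYmem hne
      rw [wt_eq_of _ (fun _ : ZMod r => (1 : ZMod 2)) (fun _ => (1 : ZMod 2))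
        (fun z : ZMod s => ∑ k ∈ Finset.range r, A (z - (k : ZMod s))) hY1
        (fun j => by rw [hY2f j, odd_cast_one hro])
        hY2s] at hwt
      have e1 : (Finset.univ.filter fun z : ZMod r => (1 : ZMod 2) ≠ 0).card = r := by
        rw [Finset.filter_true_of_mem (by simp), Finset.card_univ, ZMod.card]
      have e3' : (Finset.univ.filter fun z : ZMod s => (1 : ZMod 2) = 0 ∧
          (∑ k ∈ Finset.range r, A (z - (k : ZMod s))) ≠ 0).card = 0 := by
        rw [Finset.card_eq_zero]
        exact Finset.filter_false_of_mem fun z _ => by simp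
      rw [e1, e2', e3'] at hwt
      omega
  · -- CASE A : g not shift-invariant
    obtain ⟨z1, hz1⟩ := not_forall.mp hB
    set j1 : Fin s := ⟨z1.val, z1.val_lt⟩ with hj1def
    have hj1 : ((j1.val : ℕ) : ZMod s) = z1 := ZMod.natCast_rightInverse z1
    -- the codeword u·X0 + u·X1 shows w is even
    have hweven : ∃ w', w = 2 * w' := by
      have hmemA : (DualNumber.eps : Ru) • Xw 0 + (DualNumber.eps : Ru) • Xw 1
          ∈ cycCode r s l g a :=
        Submodule.add_mem _ (Submodule.smul_mem _ _ (hXmem 0))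
          (Submodule.smul_mem _ _ (hXmem 1))
      have hc1 : ∀ i : Fin r, ((DualNumber.eps : Ru) • Xw 0 + (DualNumber.eps : Ru) • Xw 1).1 i
          = (fun _ : ZMod r => (0 : ZMod 2)) ((i.val : ℕ) : ZMod r) := by
        intro i
        show ((DualNumber.eps : Ru) • Xw 0).1 i + ((DualNumber.eps : Ru) • Xw 1).1 i = _
        rw [hsm1, hsm1]
        simp
      have hc2 : ∀ j : Fin s,
          TrivSqZeroExt.fst (((DualNumber.eps : Ru) • Xw 0 + (DualNumber.eps : Ru) • Xw 1).2 j)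
          = (fun _ : ZMod s => (0 : ZMod 2)) ((j.val : ℕ) : ZMod s) := by
        intro j
        show TrivSqZeroExt.fst (((DualNumber.eps : Ru) • Xw 0).2 j
          + ((DualNumber.eps : Ru) • Xw 1).2 j) = _
        rw [TrivSqZeroExt.fst_add, hsm2f, hsm2f]
        simp
      have hc3 : ∀ j : Fin s,
          TrivSqZeroExt.snd (((DualNumber.eps : Ru) • Xw 0 + (DualNumber.eps : Ru) • Xw 1).2 j)
          = (fun z : ZMod s => G z + G (z - 1)) ((j.val : ℕ) : ZMod s) := by
        intro j
        show TrivSqZeroExt.snd (((DualNumber.eps : Ru) • Xw 0).2 j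
          + ((DualNumber.eps : Ru) • Xw 1).2 j) = _
        rw [TrivSqZeroExt.snd_add, hsm2s, hsm2s, hX2f, hX2f]
        simp
      have hne : (DualNumber.eps : Ru) • Xw 0 + (DualNumber.eps : Ru) • Xw 1 ≠ 0 := by
        refine ne_zero_of_snd _ j1 ?_
        rw [hc3 j1]
        show G ((j1.val : ℕ) : ZMod s) + G (((j1.val : ℕ) : ZMod s) - 1) ≠ 0
        rw [hj1]
        exact zmod2_ne_add _ _ hz1
      have hwt := hm _ hmemA hne
      rw [wt_eq_of _ (fun _ : ZMod r => (0 : ZMod 2)) (fun _ : ZMod s => (0 : ZMod 2))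
        (fun z : ZMod s => G z + G (z - 1)) hc1 hc2 hc3] at hwt
      have e1 : (Finset.univ.filter fun z : ZMod r => (0 : ZMod 2) ≠ 0).card = 0 := by simp
      have e2 : (Finset.univ.filter fun z : ZMod s => (0 : ZMod 2) ≠ 0).card = 0 := by simp
      have e3 : (Finset.univ.filter fun z : ZMod s => (0 : ZMod 2) = 0 ∧ G z + G (z - 1) ≠ 0)
          = (Finset.univ.filter fun z : ZMod s => G z + G (z - 1) ≠ 0) := by
        ext z; simp
      rw [e1, e2, e3] at hwt
      have hcDw : (Finset.univ.filter fun z : ZMod s => G z + G (z - 1) ≠ 0).card = w := by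
        omega
      have hpar := card_filter_parity (fun z : ZMod s => G z + G (z - 1))
      rw [hcDw] at hpar
      have hsplit : ∑ z : ZMod s, (G z + G (z - 1)) = 0 := by
        rw [Finset.sum_add_distrib]
        have hre : ∑ z : ZMod s, G (z - 1) = ∑ z : ZMod s, G z :=
          Fintype.sum_equiv (Equiv.subRight (1 : ZMod s)) _ _ (fun z => rfl)
        rw [hre]
        exact zmod2_two _
      rw [hsplit] at hpar
      exact (ZMod.natCast_eq_zero_iff w 2).mp hpar
    obtain ⟨w', hw'⟩ := hweven
    -- the codewords X0 + u·Xk give constancy of the mixed count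
    have htk : ∀ k : ℕ, (Finset.univ.filter
        fun z : ZMod s => G z = 0 ∧ A z + G (z - (k : ZMod s)) ≠ 0).card = t := by
      intro k
      have hmemk : Xw 0 + (DualNumber.eps : Ru) • Xw k ∈ cycCode r s l g a :=
        Submodule.add_mem _ (hXmem 0) (Submodule.smul_mem _ _ (hXmem k))
      have hc1 : ∀ i : Fin r, (Xw 0 + (DualNumber.eps : Ru) • Xw k).1 i
          = L ((i.val : ℕ) : ZMod r) := by
        intro i
        show (Xw 0).1 i + ((DualNumber.eps : Ru) • Xw k).1 i = _
        rw [hX1, hsm1]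
        simp
      have hc2 : ∀ j : Fin s, TrivSqZeroExt.fst ((Xw 0 + (DualNumber.eps : Ru) • Xw k).2 j)
          = G ((j.val : ℕ) : ZMod s) := by
        intro j
        show TrivSqZeroExt.fst ((Xw 0).2 j + ((DualNumber.eps : Ru) • Xw k).2 j) = _
        rw [TrivSqZeroExt.fst_add, hX2f, hsm2f]
        simp
      have hc3 : ∀ j : Fin s, TrivSqZeroExt.snd ((Xw 0 + (DualNumber.eps : Ru) • Xw k).2 j)
          = (fun z : ZMod s => A z + G (z - (k : ZMod s))) ((j.val : ℕ) : ZMod s) := by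
        intro j
        show TrivSqZeroExt.snd ((Xw 0).2 j + ((DualNumber.eps : Ru) • Xw k).2 j) = _
        rw [TrivSqZeroExt.snd_add, hX2s, hsm2s, hX2f]
        simp
      have hne : Xw 0 + (DualNumber.eps : Ru) • Xw k ≠ 0 := by
        refine ne_zero_of_fst _ j0 ?_
        rw [hc2 j0]
        simpa [hj0] using hz0
      have hwt := hm _ hmemk hne
      rw [wt_eq_of _ L G (fun z : ZMod s => A z + G (z - (k : ZMod s))) hc1 hc2 hc3] at hwt
      rw [← hwldef, ← hwdef] at hwt
      omega
    -- double counting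
    set wb : ℕ := (Finset.univ.filter fun z : ZMod s => G z = 0).card with hwbdef
    set al : ℕ := (Finset.univ.filter fun z : ZMod s => G z = 0 ∧ A z = 0).card with haldef
    have hsplitcard : al + t = wb := by
      have h1 := Finset.card_filter_add_card_filter_not
        (s := (Finset.univ.filter fun z : ZMod s => G z = 0)) (p := fun z => A z = 0)
      rw [Finset.filter_filter, Finset.filter_filter] at h1
      have e1 : (Finset.univ.filter fun z : ZMod s => G z = 0 ∧ ¬ A z = 0)
          = (Finset.univ.filter fun z : ZMod s => G z = 0 ∧ A z ≠ 0) := by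
        ext z; simp
      rw [e1, ← htdef, ← haldef, ← hwbdef] at h1
      exact h1
    have hwwb : w + wb = s := by
      have h1 := Finset.card_filter_add_card_filter_not
        (s := (Finset.univ : Finset (ZMod s))) (p := fun z => G z ≠ 0)
      have e1 : (Finset.univ.filter fun z : ZMod s => ¬ G z ≠ 0)
          = (Finset.univ.filter fun z : ZMod s => G z = 0) := by
        ext z; simp
      rw [e1, ← hwdef, ← hwbdef, Finset.card_univ, ZMod.card] at h1
      exact h1
    have hdouble : s * t = w * al + wb * t := by
      have lhs1 : ∑ k : Fin s, (Finset.univ.filter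
          fun z : ZMod s => G z = 0 ∧ A z + G (z - ((k.val : ℕ) : ZMod s)) ≠ 0).card = s * t := by
        rw [Finset.sum_congr rfl (fun k _ => htk k.val)]
        rw [Finset.sum_const, Finset.card_univ, Fintype.card_fin, smul_eq_mul]
      rw [← lhs1]
      rw [Finset.sum_congr rfl (fun k _ => Finset.card_filter _ _)]
      rw [Finset.sum_comm]
      have inner : ∀ z : ZMod s, (∑ k : Fin s,
          if (G z = 0 ∧ A z + G (z - ((k.val : ℕ) : ZMod s)) ≠ 0) then 1 else 0)
          = (if G z = 0 ∧ A z = 0 then w else 0) + (if G z = 0 ∧ A z ≠ 0 then wb else 0) := by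
        intro z
        have reidx : (∑ k : Fin s,
            if (G z = 0 ∧ A z + G (z - ((k.val : ℕ) : ZMod s)) ≠ 0) then 1 else 0)
            = ∑ y : ZMod s, if (G z = 0 ∧ A z + G y ≠ 0) then 1 else 0 :=
          Fintype.sum_equiv ((finZMod s).trans (Equiv.subLeft z)) _ _ (fun k => rfl)
        rw [reidx]
        by_cases hGz : G z = 0
        · by_cases hAz : A z = 0
          · have e1 : ∀ y : ZMod s,
                (if (G z = 0 ∧ A z + G y ≠ 0) then (1 : ℕ) else 0)
                = if G y ≠ 0 then 1 else 0 := by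
              intro y
              by_cases hy : G y = 0 <;> simp [hGz, hAz, hy]
            rw [Finset.sum_congr rfl (fun y _ => e1 y), ← Finset.card_filter, ← hwdef]
            simp [hGz, hAz]
          · have hA1 : A z = 1 := zmod2_one_of_ne _ hAz
            have e1 : ∀ y : ZMod s,
                (if (G z = 0 ∧ A z + G y ≠ 0) then (1 : ℕ) else 0)
                = if G y = 0 then 1 else 0 := by
              intro y
              by_cases hy : G y = 0
              · simp [hGz, hA1, hy]
              · have := zmod2_one_of_ne _ hy
                simp [hGz, hA1, this, zmod2_two]
            rw [Finset.sum_congr rfl (fun y _ => e1 y), ← Finset.card_filter, ← hwbdef]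
            simp [hGz, hAz]
        · simp [hGz]
      rw [Finset.sum_congr rfl (fun z _ => inner z)]
      rw [Finset.sum_add_distrib]
      have e2 : (∑ z : ZMod s, if G z = 0 ∧ A z = 0 then w else 0) = w * al := by
        rw [← Finset.sum_filter, Finset.sum_const, smul_eq_mul, ← haldef, Nat.mul_comm]
      have e3 : (∑ z : ZMod s, if G z = 0 ∧ A z ≠ 0 then wb else 0) = wb * t := by
        rw [← Finset.sum_filter, Finset.sum_const, smul_eq_mul, ← htdef, Nat.mul_comm]
      rw [e2, e3]
    have htal : t = al := by
      have h1 : (w + wb) * t = w * al + wb * t := by rw [hwwb]; exact hdouble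
      rw [add_mul] at h1
      have h3 : w * t = w * al := by omega
      exact Nat.eq_of_mul_eq_mul_left hwpos h3
    obtain ⟨p, hp⟩ := hs
    omega
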